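/- (Mirror marginal price relation, charge–charge pair with slack above.) Let T ≥ 1 be a horizon, C : {1,…,T} → ℝ prices, S^end ∈ ℝ, and let x = (p^C, p^D, s) ∈ X(S^end) be an optimal schedule of F(T, C, S^end). Suppose t₁ < t₂ are in {1,…,T} with p^D_{t₁} = 0, p^C_{t₁} < P̄^C, p^C_{t₂} > 0, and s_t < S̄ for all t ∈ {t₁,…,t₂−1}. Then C_{t₁} ≥ ρ^{t₂−t₁} C_{t₂}. -/
import Mathlib


open Finset

/-- Parameters of the energy storage system. -/
structure Params where
  Δt : ℝ
  ρ : ℝ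
  ηC : ℝ
  ηD : ℝ
  PC : ℝ
  PD : ℝ
  Slo : ℝ
  Shi : ℝ
  Sinit : ℝ

/-- Validity of the parameters: Δt > 0, ρ ∈ (0,1], ηC, ηD ∈ (0,1],
P̄^C > 0, P̄^D > 0, S̲ ≤ S̄, S̲ ≤ S^init ≤ S̄. -/
def Params.Valid (P : Params) : Prop :=
  0 < P.Δt ∧ 0 < P.ρ ∧ P.ρ ≤ 1 ∧ 0 < P.ηC ∧ P.ηC ≤ 1 ∧ 0 < P.ηD ∧ P.ηD ≤ 1 ∧
  0 < P.PC ∧ 0 < P.PD ∧ P.Slo ≤ P.Shi ∧ P.Slo ≤ P.Sinit ∧ P.Sinit ≤ P.Shi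

/-- A feasible schedule over the horizon {1,…,T}, with the convention s 0 = S^init. -/
def Feasible (P : Params) (T : ℕ) (pC pD s : ℕ → ℝ) : Prop :=
  s 0 = P.Sinit ∧
  ∀ t : ℕ, 1 ≤ t → t ≤ T →
    (s t = P.ρ * s (t - 1) + P.Δt * (P.ηC * pC t - pD t / P.ηD) ∧
     P.Slo ≤ s t ∧ s t ≤ P.Shi ∧
     0 ≤ pC t ∧ pC t ≤ P.PC ∧
     0 ≤ pD t ∧ pD t ≤ P.PD ∧
     pC t * pD t = 0)

/-- Profit Z = Σ_{t=1}^{T} Δt C_t (p^D_t − p^C_t). -/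
noncomputable def profit (P : Params) (T : ℕ) (C pC pD : ℕ → ℝ) : ℝ :=
  ∑ t ∈ Finset.Icc 1 T, P.Δt * C t * (pD t - pC t)

/-- Optimal schedule of F(T, C, S^end): feasible, meets the terminal constraint
s_T = S^end, and maximizes profit among such schedules. -/
def Optimal (P : Params) (T : ℕ) (C : ℕ → ℝ) (Send : ℝ) (pC pD s : ℕ → ℝ) : Prop :=
  Feasible P T pC pD s ∧ s T = Send ∧
  ∀ qC qD r : ℕ → ℝ, Feasible P T qC qD r → r T = Send →
    profit P T C qC qD ≤ profit P T C pC pD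

/-- Minimum reachable level S̲_T at the end of the planning horizon. -/
noncomputable def SloT (P : Params) (T : ℕ) : ℝ :=
  max P.Slo (P.ρ ^ T * P.Sinit - P.Δt * (P.PD / P.ηD) * ∑ t ∈ Finset.range T, P.ρ ^ t)

/-- Maximum reachable level S̄_T at the end of the planning horizon. -/
noncomputable def ShiT (P : Params) (T : ℕ) : ℝ :=
  min P.Shi (P.ρ ^ T * P.Sinit + P.Δt * P.ηC * P.PC * ∑ t ∈ Finset.range T, P.ρ ^ t)

/-- Mirror marginal price relation (charge–charge pair with slack above):
if an optimal schedule does not discharge at t₁ and has slack charge capacity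
there, charges at t₂ > t₁, with the state of energy strictly below S̄ on
{t₁,…,t₂−1}, then C_{t₁} ≥ ρ^{t₂−t₁} C_{t₂}. -/
theorem mirror_charge_charge (P : Params) (hP : P.Valid) (T : ℕ) (hT : 1 ≤ T)
    (C : ℕ → ℝ) (Send : ℝ) (pC pD s : ℕ → ℝ) (hx : Optimal P T C Send pC pD s)
    (t₁ t₂ : ℕ) (ht₁ : 1 ≤ t₁) (h12 : t₁ < t₂) (ht₂ : t₂ ≤ T)
    (hd : pD t₁ = 0) (hslack : pC t₁ < P.PC) (hc : 0 < pC t₂)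
    (hs : ∀ t : ℕ, t₁ ≤ t → t ≤ t₂ - 1 → s t < P.Shi) :
    P.ρ ^ (t₂ - t₁) * C t₂ ≤ C t₁ := by
  obtain ⟨hΔt, hρ0, hρ1, hηC0, hηC1, hηD0, hηD1, hPC, hPD, hSS, hS1, hS2⟩ := hP
  obtain ⟨⟨hs0, hfeas⟩, hTend, hopt⟩ := hx
  have hpow : ∀ k : ℕ, 0 < P.ρ ^ k := fun k => pow_pos hρ0 k
  have hpow1 : ∀ k : ℕ, P.ρ ^ k ≤ 1 := fun k => pow_le_one₀ hρ0.le hρ1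
  -- slack minimum
  have hne : (Finset.Icc t₁ (t₂ - 1)).Nonempty := ⟨t₁, by simp [Finset.mem_Icc]; omega⟩
  set m := (Finset.Icc t₁ (t₂ - 1)).inf' hne (fun t => P.Shi - s t) with hm
  have hm0 : 0 < m := by
    rw [hm, Finset.lt_inf'_iff]
    intro t ht
    rw [Finset.mem_Icc] at ht
    linarith [hs t ht.1 ht.2]
  have hmle : ∀ t, t₁ ≤ t → t ≤ t₂ - 1 → m ≤ P.Shi - s t := by
    intro t h1 h2
    exact Finset.inf'_le _ (Finset.mem_Icc.mpr ⟨h1, h2⟩)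
  obtain ⟨ε, hε0, hε1, hε2, hε3⟩ : ∃ ε : ℝ, 0 < ε ∧ ε ≤ P.PC - pC t₁ ∧ ε ≤ pC t₂ ∧
      P.Δt * P.ηC * ε ≤ m := by
    refine ⟨min (P.PC - pC t₁) (min (pC t₂) (m / (P.Δt * P.ηC))), ?_, min_le_left _ _,
      le_trans (min_le_right _ _) (min_le_left _ _), ?_⟩
    · exact lt_min (by linarith) (lt_min hc (div_pos hm0 (mul_pos hΔt hηC0)))
    · have h1 : min (P.PC - pC t₁) (min (pC t₂) (m / (P.Δt * P.ηC))) ≤ m / (P.Δt * P.ηC) :=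
        le_trans (min_le_right _ _) (min_le_right _ _)
      calc P.Δt * P.ηC * min (P.PC - pC t₁) (min (pC t₂) (m / (P.Δt * P.ηC)))
          ≤ P.Δt * P.ηC * (m / (P.Δt * P.ηC)) := by
            apply mul_le_mul_of_nonneg_left h1 (le_of_lt (mul_pos hΔt hηC0))
        _ = m := by field_simp
  -- perturbed schedule
  set qC : ℕ → ℝ := fun t =>
    if t = t₁ then pC t₁ + ε else if t = t₂ then pC t₂ - P.ρ ^ (t₂ - t₁) * ε else pC t
    with hqC
  set r : ℕ → ℝ := fun t =>
    if t₁ ≤ t ∧ t < t₂ then s t + P.Δt * P.ηC * P.ρ ^ (t - t₁) * ε else s t with hr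
  have hq1 : qC t₁ = pC t₁ + ε := by rw [hqC]; simp
  have hq2 : qC t₂ = pC t₂ - P.ρ ^ (t₂ - t₁) * ε := by
    simp only [hqC]
    rw [if_neg (by omega : ¬ t₂ = t₁)]
    simp
  have hq3 : ∀ t, t ≠ t₁ → t ≠ t₂ → qC t = pC t := by
    intro t h1 h2; rw [hqC]; simp only [if_neg h1, if_neg h2]
  have hr1 : ∀ t, t₁ ≤ t → t < t₂ → r t = s t + P.Δt * P.ηC * P.ρ ^ (t - t₁) * ε := by
    intro t h1 h2; rw [hr]; simp only [if_pos (And.intro h1 h2)]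
  have hr2 : ∀ t, ¬ (t₁ ≤ t ∧ t < t₂) → r t = s t := by
    intro t h; rw [hr]; simp only [if_neg h]
  have hcomp2 : pD t₂ = 0 := by
    have h := (hfeas t₂ (by omega) ht₂).2.2.2.2.2.2.2
    have h0 := (hfeas t₂ (by omega) ht₂).2.2.2.2.2.1
    rcases mul_eq_zero.mp h with h' | h'
    · linarith
    · exact h'
  have hfeas' : Feasible P T qC pD r := by
    refine ⟨?_, ?_⟩
    · rw [hr2 0 (by omega)]; exact hs0
    · intro t h1t htT
      obtain ⟨heq, hlo, hhi, hc0, hcP, hd0', hdP, hcc⟩ := hfeas t h1t htT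
      have hpw : t₁ < t → P.ρ * P.ρ ^ (t - 1 - t₁) = P.ρ ^ (t - t₁) := by
        intro h
        have he : t - t₁ = (t - 1 - t₁) + 1 := by omega
        rw [he, pow_succ]; ring
      refine ⟨?_, ?_, ?_, ?_, ?_, hd0', hdP, ?_⟩
      · -- dynamics
        rcases lt_trichotomy t t₁ with h | h | h
        · rw [hr2 t (by omega), hr2 (t - 1) (by omega), hq3 t (by omega) (by omega)]
          exact heq
        · subst h
          rw [hr1 t (le_refl t) h12, hr2 (t - 1) (by omega), hq1, Nat.sub_self, pow_zero]
          rw [heq]; ring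
        · rcases lt_trichotomy t t₂ with h2 | h2 | h2
          · rw [hr1 t (by omega) h2, hr1 (t - 1) (by omega) (by omega),
              hq3 t (by omega) (by omega)]
            linear_combination heq - P.Δt * P.ηC * ε * hpw h
          · subst h2
            rw [hr2 t (by omega), hr1 (t - 1) (by omega) (by omega), hq2]
            linear_combination heq - P.Δt * P.ηC * ε * hpw h
          · rw [hr2 t (by omega), hr2 (t - 1) (by omega), hq3 t (by omega) (by omega)]
            exact heq
      · -- lower bound
        by_cases h : t₁ ≤ t ∧ t < t₂
        · rw [hr1 t h.1 h.2]
          have : 0 ≤ P.Δt * P.ηC * P.ρ ^ (t - t₁) * ε :=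
            le_of_lt (mul_pos (mul_pos (mul_pos hΔt hηC0) (hpow _)) hε0)
          linarith
        · rw [hr2 t h]; exact hlo
      · -- upper bound
        by_cases h : t₁ ≤ t ∧ t < t₂
        · rw [hr1 t h.1 h.2]
          have ha : P.ρ ^ (t - t₁) * ε ≤ 1 * ε :=
            mul_le_mul_of_nonneg_right (hpow1 _) hε0.le
          have h1 : P.Δt * P.ηC * P.ρ ^ (t - t₁) * ε ≤ P.Δt * P.ηC * ε := by
            calc P.Δt * P.ηC * P.ρ ^ (t - t₁) * ε = P.Δt * P.ηC * (P.ρ ^ (t - t₁) * ε) := by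
                  ring
              _ ≤ P.Δt * P.ηC * (1 * ε) :=
                  mul_le_mul_of_nonneg_left ha (le_of_lt (mul_pos hΔt hηC0))
              _ = P.Δt * P.ηC * ε := by ring
          have h2 : m ≤ P.Shi - s t := hmle t h.1 (by omega)
          linarith
        · rw [hr2 t h]; exact hhi
      · -- qC ≥ 0
        rcases eq_or_ne t t₁ with h1 | h1
        · subst h1; rw [hq1]; linarith
        · rcases eq_or_ne t t₂ with h2 | h2
          · subst h2; rw [hq2]
            have ha : P.ρ ^ (t - t₁) * ε ≤ 1 * ε :=
              mul_le_mul_of_nonneg_right (hpow1 _) hε0.le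
            linarith
          · rw [hq3 t h1 h2]; exact hc0
      · -- qC ≤ PC
        rcases eq_or_ne t t₁ with h1 | h1
        · subst h1; rw [hq1]; linarith
        · rcases eq_or_ne t t₂ with h2 | h2
          · subst h2; rw [hq2]
            have ha : 0 ≤ P.ρ ^ (t - t₁) * ε := le_of_lt (mul_pos (hpow _) hε0)
            linarith
          · rw [hq3 t h1 h2]; exact hcP
      · -- complementarity
        rcases eq_or_ne t t₁ with h1 | h1
        · subst h1; rw [hq1, hd]; ring
        · rcases eq_or_ne t t₂ with h2 | h2
          · subst h2; rw [hq2, hcomp2]; ring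
          · rw [hq3 t h1 h2]; exact hcc
  have hrT : r T = Send := by
    rw [hr2 T (by omega)]; exact hTend
  have hle := hopt qC pD r hfeas' hrT
  -- compute profit difference
  have hdiff : profit P T C qC pD =
      profit P T C pC pD - P.Δt * C t₁ * ε + P.Δt * C t₂ * (P.ρ ^ (t₂ - t₁) * ε) := by
    unfold profit
    have hpt : ∀ t ∈ Finset.Icc 1 T,
        P.Δt * C t * (pD t - qC t) = P.Δt * C t * (pD t - pC t) +
          ((if t = t₁ then -(P.Δt * C t₁ * ε) else 0) +
           (if t = t₂ then P.Δt * C t₂ * (P.ρ ^ (t₂ - t₁) * ε) else 0)) := by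
      intro t _
      rcases eq_or_ne t t₁ with h1 | h1
      · subst h1
        rw [hq1, if_pos rfl, if_neg (by omega)]; ring
      · rcases eq_or_ne t t₂ with h2 | h2
        · subst h2
          rw [hq2, if_neg h1, if_pos rfl]; ring
        · rw [hq3 t h1 h2, if_neg h1, if_neg h2]; ring
    rw [Finset.sum_congr rfl hpt, Finset.sum_add_distrib, Finset.sum_add_distrib,
      Finset.sum_ite_eq' (Finset.Icc 1 T) t₁, Finset.sum_ite_eq' (Finset.Icc 1 T) t₂,
      if_pos (Finset.mem_Icc.mpr ⟨ht₁, by omega⟩),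
      if_pos (Finset.mem_Icc.mpr ⟨by omega, ht₂⟩)]
    ring
  rw [hdiff] at hle
  have hkey : P.Δt * ε * (P.ρ ^ (t₂ - t₁) * C t₂ - C t₁) ≤ 0 := by
    have heq2 : P.Δt * ε * (P.ρ ^ (t₂ - t₁) * C t₂ - C t₁) =
        (profit P T C pC pD - P.Δt * C t₁ * ε + P.Δt * C t₂ * (P.ρ ^ (t₂ - t₁) * ε)) -
          profit P T C pC pD := by ring
    linarith [hle]
  by_contra hX
  push_neg at hX
  have hpos : 0 < P.Δt * ε * (P.ρ ^ (t₂ - t₁) * C t₂ - C t₁) :=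
    mul_pos (mul_pos hΔt hε0) (by linarith)
  linarith
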